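/- Let P⁺ = L(J P J^T + G E G^T + Q)L^T + K R K^T with J, L invertible, P, E, Q, R symmetric positive semidefinite. If G E G^T + Q + L^{-1} K R K^T L^{-T} ≥ c·I for some c > 0, and P ≤ p̄ I, ‖J‖ ≤ j̄, then P⁺ ≥ (1 + c/(p̄ j̄²)) · L J P J^T L^T. -/

import Mathlib

open Matrix


/-- Euclidean operator norm of a (possibly rectangular) real matrix. -/
noncomputable def opNorm {m n : ℕ} (A : Matrix (Fin m) (Fin n) ℝ) : ℝ :=
  ‖(Matrix.toEuclideanLin A).toContinuousLinearMap‖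

lemma opNorm_transpose {n : ℕ} (A : Matrix (Fin n) (Fin n) ℝ) :
    opNorm A.transpose = opNorm A := by
  rw [← Matrix.conjTranspose_eq_transpose_of_trivial]
  unfold opNorm
  rw [Matrix.toEuclideanLin_conjTranspose_eq_adjoint,
      LinearMap.adjoint_toContinuousLinearMap]
  exact LinearIsometryEquiv.norm_map ContinuousLinearMap.adjoint _

lemma dot_self_eq_norm_sq {n : ℕ} (v : Fin n → ℝ) :
    v ⬝ᵥ v = ‖(WithLp.equiv 2 (Fin n → ℝ)).symm v‖ ^ 2 := by
  rw [EuclideanSpace.norm_eq, Real.sq_sqrt (by positivity)]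
  simp [dotProduct, sq, Real.norm_eq_abs, abs_mul_abs_self]

lemma transpose_mulVec_dot_le {n : ℕ} (J : Matrix (Fin n) (Fin n) ℝ) (x : Fin n → ℝ) :
    (J.transpose *ᵥ x) ⬝ᵥ (J.transpose *ᵥ x) ≤ (opNorm J) ^ 2 * (x ⬝ᵥ x) := by
  set x' : EuclideanSpace ℝ (Fin n) := (WithLp.equiv 2 (Fin n → ℝ)).symm x with hx'
  have e2 : (Matrix.toEuclideanLin J.transpose).toContinuousLinearMap x'
      = (WithLp.equiv 2 (Fin n → ℝ)).symm (J.transpose *ᵥ x) := by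
    simp [hx', Matrix.toEuclideanLin_apply_piLp_toLp]
  calc (J.transpose *ᵥ x) ⬝ᵥ (J.transpose *ᵥ x)
      = ‖(Matrix.toEuclideanLin J.transpose).toContinuousLinearMap x'‖ ^ 2 := by
        rw [dot_self_eq_norm_sq, e2]
    _ ≤ (‖(Matrix.toEuclideanLin J.transpose).toContinuousLinearMap‖ * ‖x'‖) ^ 2 := by
        apply pow_le_pow_left₀ (norm_nonneg _)
        exact ContinuousLinearMap.le_opNorm _ _
    _ = (opNorm J.transpose) ^ 2 * ‖x'‖ ^ 2 := by rw [opNorm]; ring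
    _ = (opNorm J) ^ 2 * (x ⬝ᵥ x) := by rw [opNorm_transpose, dot_self_eq_norm_sq x]


/-- Let `P⁺ = L (J P Jᵀ + G E Gᵀ + Q) Lᵀ + K R Kᵀ` with `J, L` invertible and
`P, E, Q, R` positive (semi)definite.  If
`G E Gᵀ + Q + L⁻¹ K R Kᵀ L⁻ᵀ ≥ c I` for some `c > 0`, `P ≤ p̄ I` and `‖J‖ ≤ j̄`,
then `P⁺ ≥ (1 + c/(p̄ j̄²)) L J P Jᵀ Lᵀ`. -/
theorem posterior_covariance_lower_bound
    (n d m : ℕ)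
    (P J L Q : Matrix (Fin n) (Fin n) ℝ)
    (G : Matrix (Fin n) (Fin d) ℝ) (E : Matrix (Fin d) (Fin d) ℝ)
    (K : Matrix (Fin n) (Fin m) ℝ) (R : Matrix (Fin m) (Fin m) ℝ)
    (pbar jbar c : ℝ)
    (hJ : IsUnit J.det) (hL : IsUnit L.det)
    (hP : P.PosDef)
    (hPub : (pbar • (1 : Matrix (Fin n) (Fin n) ℝ) - P).PosSemidef)
    (hJn : opNorm J ≤ jbar)
    (hE : E.PosSemidef) (hQ : Q.PosSemidef) (hR : R.PosSemidef)
    (hc : 0 < c)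
    (hcl : (G * E * G.transpose + Q
            + L⁻¹ * K * R * K.transpose * (L⁻¹).transpose
            - c • (1 : Matrix (Fin n) (Fin n) ℝ)).PosSemidef)
    (Pplus : Matrix (Fin n) (Fin n) ℝ)
    (hPplus : Pplus = L * (J * P * J.transpose + G * E * G.transpose + Q)
        * L.transpose + K * R * K.transpose) :
    (Pplus - (1 + c / (pbar * jbar ^ 2)) •
        (L * J * P * J.transpose * L.transpose)).PosSemidef := by
  rcases Nat.eq_zero_or_pos n with hn | hn
  · subst hn
    exact ⟨Matrix.ext fun i _ => Fin.elim0 i, fun x => by simp [Finsupp.sum, Finset.eq_empty_of_isEmpty x.support]⟩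
  have : NeZero n := ⟨hn.ne'⟩
  -- pbar > 0
  set xv : Fin n → ℝ := Pi.single 0 1 with hxv
  have hx0 : xv ≠ 0 := by
    intro h
    have := congrFun h 0
    simp [hxv] at this
  have hPx := hP.dotProduct_mulVec_pos hx0
  have hUx := hPub.dotProduct_mulVec_nonneg xv
  have hdot1 : xv ⬝ᵥ xv = 1 := by
    simp [hxv, dotProduct, Pi.single_apply]
  have hpbar : 0 < pbar := by
    simp only [Matrix.sub_mulVec, Matrix.smul_mulVec, Matrix.one_mulVec,
      dotProduct_sub, dotProduct_smul, star_trivial, smul_eq_mul,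
      hdot1, mul_one, sub_nonneg] at hUx
    simp only [star_trivial] at hPx
    linarith
  -- jbar > 0
  have hJne : J ≠ 0 := by
    intro h
    rw [h, Matrix.det_zero] at hJ
    simpa using hJ
  have hopnn : (0:ℝ) ≤ opNorm J := norm_nonneg _
  have hjbar : 0 < jbar := by
    have h1 : Matrix.toEuclideanLin J ≠ 0 :=
      (Matrix.toEuclideanLin (𝕜 := ℝ) (m := Fin n) (n := Fin n)).map_ne_zero_iff.mpr hJne
    have h2 : (Matrix.toEuclideanLin J).toContinuousLinearMap ≠ 0 :=
      LinearEquiv.map_ne_zero_iff (LinearMap.toContinuousLinearMap) |>.mpr h1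
    have : (0:ℝ) < opNorm J := norm_pos_iff.mpr h2
    linarith
  have hpj : (0:ℝ) < pbar * jbar ^ 2 := by positivity
  -- key PSD matrix
  have hherm : (J * P * J.transpose).IsHermitian := by
    have h := (hP.posSemidef.mul_mul_conjTranspose_same J).1
    rwa [Matrix.conjTranspose_eq_transpose_of_trivial] at h
  have hM : ((pbar * jbar ^ 2) • (1 : Matrix (Fin n) (Fin n) ℝ)
      - J * P * J.transpose).PosSemidef := by
    refine Matrix.PosSemidef.of_dotProduct_mulVec_nonneg ?_ ?_
    · show _ᴴ = _
      rw [Matrix.conjTranspose_sub, Matrix.conjTranspose_smul,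
        Matrix.conjTranspose_one, hherm.eq]
      simp
    · intro x
      simp only [star_trivial, Matrix.sub_mulVec, Matrix.smul_mulVec,
        Matrix.one_mulVec, dotProduct_sub, dotProduct_smul, smul_eq_mul]
      have hrev : x ⬝ᵥ ((J * P * J.transpose) *ᵥ x)
          = (J.transpose *ᵥ x) ⬝ᵥ (P *ᵥ (J.transpose *ᵥ x)) := by
        rw [← Matrix.mulVec_mulVec, ← Matrix.mulVec_mulVec,
          dotProduct_mulVec x J, ← Matrix.mulVec_transpose]
      rw [hrev]
      set y := J.transpose *ᵥ x with hy
      have h1 : y ⬝ᵥ (P *ᵥ y) ≤ pbar * (y ⬝ᵥ y) := by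
        have := hPub.dotProduct_mulVec_nonneg y
        simp only [star_trivial, Matrix.sub_mulVec, Matrix.smul_mulVec,
          Matrix.one_mulVec, dotProduct_sub, dotProduct_smul,
          smul_eq_mul, sub_nonneg] at this
        exact this
      have h2 : y ⬝ᵥ y ≤ (opNorm J) ^ 2 * (x ⬝ᵥ x) := transpose_mulVec_dot_le J x
      have h3 : (opNorm J) ^ 2 ≤ jbar ^ 2 := pow_le_pow_left₀ hopnn hJn 2
      have hxx : (0:ℝ) ≤ x ⬝ᵥ x := Finset.sum_nonneg fun i _ => mul_self_nonneg _
      nlinarith [mul_le_mul_of_nonneg_left h2 hpbar.le,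
        mul_le_mul_of_nonneg_left (mul_le_mul_of_nonneg_right h3 hxx) hpbar.le]
  -- smul PSD
  have hsm : ((c / (pbar * jbar ^ 2)) • ((pbar * jbar ^ 2) • (1 : Matrix (Fin n) (Fin n) ℝ)
      - J * P * J.transpose)).PosSemidef := by
    refine Matrix.PosSemidef.of_dotProduct_mulVec_nonneg ?_ (fun x => ?_)
    · show _ᴴ = _
      rw [Matrix.conjTranspose_smul, hM.1.eq]
      simp
    rw [Matrix.smul_mulVec, dotProduct_smul, smul_eq_mul]
    exact mul_nonneg (by positivity) (hM.dotProduct_mulVec_nonneg x)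
  have hS := (hcl.add hsm).mul_mul_conjTranspose_same L
  rw [Matrix.conjTranspose_eq_transpose_of_trivial] at hS
  have hc'e : c / (pbar * jbar ^ 2) * (pbar * jbar ^ 2) = c := div_mul_cancel₀ _ hpj.ne'
  have h2 : (L⁻¹).transpose * L.transpose = 1 := by
    rw [← Matrix.transpose_mul, Matrix.mul_nonsing_inv _ hL, Matrix.transpose_one]
  have hiden : Pplus - (1 + c / (pbar * jbar ^ 2)) •
      (L * J * P * J.transpose * L.transpose)
      = L * ((G * E * G.transpose + Q
            + L⁻¹ * K * R * K.transpose * (L⁻¹).transpose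
            - c • (1 : Matrix (Fin n) (Fin n) ℝ))
        + (c / (pbar * jbar ^ 2)) • ((pbar * jbar ^ 2) • (1 : Matrix (Fin n) (Fin n) ℝ)
            - J * P * J.transpose)) * L.transpose := by
    subst hPplus
    simp only [Matrix.mul_add, Matrix.add_mul, Matrix.mul_sub, Matrix.sub_mul,
      Matrix.smul_mul, Matrix.mul_smul, smul_sub, smul_smul, add_smul, one_smul,
      Matrix.mul_one, Matrix.one_mul, Matrix.mul_assoc, hc'e, h2,
      Matrix.mul_nonsing_inv_cancel_left _ _ hL]
    abel
  rw [hiden]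
  exact hS
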